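/- Let a and r be positive integers such that a + 1 is not a power of 2 and r is odd. Assume there exists a positive integer τ such that a^{2^τ} − 1 is divisible by two distinct primes p₀ and p_τ, neither of which divides a^{2^m} − 1 for any m ∈ [0, τ−1]. Then there exist infinitely many positive integers k such that C(k, r) is an a-Sierpiński number: gcd(C(k,r) + 1, a − 1) = 1, C(k, r) is not a power of a, and C(k, r) · a^n + 1 is composite for all positive integers n. -/

import Mathlib

open Finset Nat

private lemma auxChooseLB (s t : ℕ) : t + 1 ≤ (s + 1 + t).choose (s + 1) := by
  induction t with
  | zero => simp
  | succ t ih =>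
    have h1 : s + 1 + (t + 1) = (s + t + 1) + 1 := by omega
    rw [h1, Nat.choose_succ_succ]
    have h2 : 0 < (s + t + 1).choose s := Nat.choose_pos (by omega)
    have h3 : s + 1 + t = s + t + 1 := by omega
    rw [h3] at ih
    simp only [Nat.succ_eq_add_one]
    omega

private lemma auxDesc (x rr : ℕ) (h : rr ≤ x) :
    (rr ! : ℤ) * (x.choose rr : ℤ) = ∏ j ∈ Finset.range rr, ((x : ℤ) - (j : ℤ)) := by
  have h1 : rr ! * x.choose rr = x.descFactorial rr :=
    (Nat.descFactorial_eq_factorial_mul_choose x rr).symm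
  calc (rr ! : ℤ) * (x.choose rr : ℤ) = ((rr ! * x.choose rr : ℕ) : ℤ) := by push_cast; ring
    _ = ((x.descFactorial rr : ℕ) : ℤ) := by rw [h1]
    _ = ∏ j ∈ Finset.range rr, ((x : ℤ) - (j : ℤ)) := by
        rw [Nat.descFactorial_eq_prod_range, Nat.cast_prod]
        exact Finset.prod_congr rfl fun j hj => by
          have hjx : j ≤ x := le_trans (Nat.le_of_lt (mem_range.mp hj)) h
          exact Nat.cast_sub hjx

private lemma auxProdModEq (M x y : ℤ) (h : M ∣ x - y) (rr : ℕ) :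
    M ∣ (∏ j ∈ Finset.range rr, (x - (j : ℤ))) - ∏ j ∈ Finset.range rr, (y - (j : ℤ)) := by
  induction rr with
  | zero => simp
  | succ n ih =>
    rw [Finset.prod_range_succ, Finset.prod_range_succ]
    have key : (∏ j ∈ Finset.range n, (x - (j : ℤ))) * (x - (n : ℤ)) -
        (∏ j ∈ Finset.range n, (y - (j : ℤ))) * (y - (n : ℤ)) =
        ((∏ j ∈ Finset.range n, (x - (j : ℤ))) - ∏ j ∈ Finset.range n, (y - (j : ℤ))) *
          (x - (n : ℤ)) +
        (∏ j ∈ Finset.range n, (y - (j : ℤ))) * (x - y) := by ring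
    rw [key]
    exact dvd_add (ih.mul_right _) (h.mul_left _)

private lemma auxFactLe (p n : ℕ) (hn : n ≠ 0) : n.factorization p ≤ n := by
  by_cases hp : p.Prime
  · have h1 : p ^ n.factorization p ≤ n := Nat.ordProj_le p hn
    have h2 : n.factorization p < 2 ^ n.factorization p := Nat.lt_two_pow_self
    have h3 : 2 ^ n.factorization p ≤ p ^ n.factorization p :=
      Nat.pow_le_pow_left hp.two_le _
    omega
  · simp [Nat.factorization_eq_zero_of_not_prime n hp]

private lemma auxChooseMod (p rr x L β : ℕ) (hp : p.Prime) (hrx : rr ≤ x)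
    (hL : (rr !).factorization p + β ≤ L) (y c : ℤ)
    (hxy : ((p : ℤ)) ^ L ∣ (x : ℤ) - y)
    (hyc : (∏ j ∈ Finset.range rr, (y - (j : ℤ))) = (rr ! : ℤ) * c) :
    (p : ℤ) ^ β ∣ (x.choose rr : ℤ) - c := by
  set e := (rr !).factorization p with he
  have hfac : rr ! = p ^ e * (rr ! / p ^ e) := (Nat.ordProj_mul_ordCompl_eq_self (rr !) p).symm
  have hu : ¬ (p : ℤ) ∣ ((rr ! / p ^ e : ℕ) : ℤ) := by
    rw [Int.natCast_dvd_natCast]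
    exact Nat.not_dvd_ordCompl hp (Nat.factorial_ne_zero rr)
  have h1 : (p : ℤ) ^ L ∣ (rr ! : ℤ) * ((x.choose rr : ℤ) - c) := by
    have h2 := auxProdModEq ((p : ℤ) ^ L) (x : ℤ) y hxy rr
    rw [← auxDesc x rr hrx, hyc] at h2
    have h3 : (rr ! : ℤ) * (x.choose rr : ℤ) - (rr ! : ℤ) * c =
        (rr ! : ℤ) * ((x.choose rr : ℤ) - c) := by ring
    rwa [h3] at h2
  have h3 : (p : ℤ) ^ (e + β) ∣ (rr ! : ℤ) * ((x.choose rr : ℤ) - c) :=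
    dvd_trans (pow_dvd_pow _ (by omega)) h1
  have h4 : (rr ! : ℤ) = (p : ℤ) ^ e * ((rr ! / p ^ e : ℕ) : ℤ) := by
    exact_mod_cast congrArg (Nat.cast : ℕ → ℤ) hfac
  rw [h4, pow_add, mul_assoc] at h3
  have hpe : ((p : ℤ)) ^ e ≠ 0 := pow_ne_zero _ (by exact_mod_cast hp.pos.ne')
  have h5 : (p : ℤ) ^ β ∣ ((rr ! / p ^ e : ℕ) : ℤ) * ((x.choose rr : ℤ) - c) :=
    (mul_dvd_mul_iff_left hpe).mp h3
  exact (Int.prime_iff_natAbs_prime.mpr (by simpa using hp)).pow_dvd_of_dvd_mul_left β hu h5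

private lemma auxProdR (rr : ℕ) :
    (∏ j ∈ Finset.range rr, ((rr : ℤ) - (j : ℤ))) = (rr ! : ℤ) * 1 := by
  rw [← auxDesc rr rr le_rfl, Nat.choose_self]; simp

private lemma auxProdNeg (rr : ℕ) :
    (∏ j ∈ Finset.range rr, ((-1 : ℤ) - (j : ℤ))) = (-1) ^ rr * (rr ! : ℤ) := by
  induction rr with
  | zero => simp
  | succ n ih =>
    rw [Finset.prod_range_succ, ih, Nat.factorial_succ]
    push_cast
    ring

private lemma auxOddPrime (n : ℕ) (h2 : 2 < n) (hnp : ¬ ∃ s : ℕ, n = 2 ^ s) :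
    ∃ p : ℕ, p.Prime ∧ p ≠ 2 ∧ p ∣ n := by
  have hn0 : n ≠ 0 := by omega
  have hmul : 2 ^ (n.factorization 2) * (n / 2 ^ (n.factorization 2)) = n :=
    Nat.ordProj_mul_ordCompl_eq_self n 2
  have hu1 : n / 2 ^ (n.factorization 2) ≠ 1 := by
    intro h1
    rw [h1, mul_one] at hmul
    exact hnp ⟨n.factorization 2, hmul.symm⟩
  refine ⟨(n / 2 ^ (n.factorization 2)).minFac, Nat.minFac_prime hu1, ?_,
    dvd_trans (Nat.minFac_dvd _) (Nat.ordCompl_dvd n 2)⟩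
  intro h2e
  have hd := Nat.minFac_dvd (n / 2 ^ (n.factorization 2))
  rw [h2e] at hd
  exact Nat.not_dvd_ordCompl Nat.prime_two hn0 hd

private lemma auxSqFac (a m : ℕ) (ha : 1 ≤ a) :
    a ^ 2 ^ (m + 1) - 1 = (a ^ 2 ^ m - 1) * (a ^ 2 ^ m + 1) := by
  have h1 : a ^ 2 ^ (m + 1) = (a ^ 2 ^ m) ^ 2 := by
    rw [← pow_mul, ← pow_succ]
  obtain ⟨y, hy⟩ : ∃ y, a ^ 2 ^ m = y + 1 :=
    ⟨a ^ 2 ^ m - 1, by have := Nat.one_le_pow (2 ^ m) a (by omega); omega⟩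
  rw [h1, hy]
  have h2 : (y + 1) ^ 2 = y * (y + 2) + 1 := by ring
  rw [h2]
  simp [Nat.add_sub_cancel]
theorem stmt_15 (a r : ℕ) (ha : 0 < a) (hr : 0 < r) (hodd : Odd r)
    (ha2 : ¬ ∃ s : ℕ, a + 1 = 2 ^ s)
    (hτ : ∃ τ : ℕ, 0 < τ ∧ ∃ p₀ pτ : ℕ, p₀.Prime ∧ pτ.Prime ∧ p₀ ≠ pτ ∧
      p₀ ∣ a ^ 2 ^ τ - 1 ∧ pτ ∣ a ^ 2 ^ τ - 1 ∧
      ∀ m : ℕ, m < τ → ¬ p₀ ∣ a ^ 2 ^ m - 1 ∧ ¬ pτ ∣ a ^ 2 ^ m - 1) :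
    {k : ℕ | 0 < k ∧
      Nat.gcd (Nat.choose k r + 1) (a - 1) = 1 ∧
      (¬ ∃ e : ℕ, Nat.choose k r = a ^ e) ∧
      ∀ n : ℕ, 0 < n →
        1 < Nat.choose k r * a ^ n + 1 ∧
        ¬ Nat.Prime (Nat.choose k r * a ^ n + 1)}.Infinite := by
  obtain ⟨τ, hτpos, p₀, pτ, hp₀, hpτ, hne, hp₀d, hpτd, hmain⟩ := hτ
  have ha2' : 2 ≤ a := by
    rcases Nat.lt_or_ge a 2 with h | h
    · exfalso
      interval_cases a
      exact ha2 ⟨1, by norm_num⟩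
    · exact h
  -- factorization of a^(2^τ) - 1
  have hfacτ : a ^ 2 ^ τ - 1 = (a ^ 2 ^ (τ - 1) - 1) * (a ^ 2 ^ (τ - 1) + 1) := by
    have h := auxSqFac a (τ - 1) (by omega)
    rwa [show τ - 1 + 1 = τ from by omega] at h
  have hP0X : p₀ ∣ a ^ 2 ^ (τ - 1) + 1 := by
    have h := hp₀d
    rw [hfacτ] at h
    rcases (Nat.Prime.dvd_mul hp₀).mp h with h | h
    · exact absurd h (hmain (τ - 1) (by omega)).1
    · exact h
  have hPtX : pτ ∣ a ^ 2 ^ (τ - 1) + 1 := by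
    have h := hpτd
    rw [hfacτ] at h
    rcases (Nat.Prime.dvd_mul hpτ).mp h with h | h
    · exact absurd h (hmain (τ - 1) (by omega)).2
    · exact h
  -- p₀ and pτ are odd
  have key2 : ∀ p : ℕ, p ∣ a ^ 2 ^ (τ - 1) + 1 → ¬ p ∣ a ^ 2 ^ 0 - 1 → p ≠ 2 := by
    intro p hpd hnd hp2
    subst hp2
    have hX1 : 1 ≤ a ^ 2 ^ (τ - 1) := Nat.one_le_pow _ _ (by omega)
    have hXodd : ¬ 2 ∣ a ^ 2 ^ (τ - 1) := by
      intro h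
      omega
    have haodd : ¬ 2 ∣ a := by
      intro h
      exact hXodd (dvd_pow h (pow_ne_zero _ (by norm_num)))
    simp only [pow_zero, pow_one] at hnd
    omega
  have hp₀2 : p₀ ≠ 2 := key2 p₀ hP0X (hmain 0 hτpos).1
  have hpτ2 : pτ ≠ 2 := key2 pτ hPtX (hmain 0 hτpos).2
  have hp₀3 : 3 ≤ p₀ := by have := hp₀.two_le; omega
  have hpτ3 : 3 ≤ pτ := by have := hpτ.two_le; omega
  -- odd prime divisors of a^(2^m) + 1
  have hqex : ∀ m : ℕ, ∃ p : ℕ, p.Prime ∧ p ≠ 2 ∧ p ∣ a ^ 2 ^ m + 1 := by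
    intro m
    have hbig : 2 ≤ a ^ 2 ^ m := le_trans ha2' (Nat.le_self_pow (pow_ne_zero _ (by norm_num)) a)
    rcases Nat.eq_zero_or_pos m with rfl | hm
    · refine auxOddPrime (a ^ 2 ^ 0 + 1) (by omega) ?_
      simpa only [pow_zero, pow_one] using ha2
    · refine auxOddPrime _ (by omega) ?_
      rintro ⟨s, hs⟩
      have hbsq : a ^ 2 ^ m = (a ^ 2 ^ (m - 1)) ^ 2 := by
        have hme : 2 ^ m = 2 ^ (m - 1) * 2 := by
          rw [← pow_succ]
          congr 1
          omega
        rw [hme, pow_mul]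
      set b := a ^ 2 ^ (m - 1) with hb
      have hb2 : 2 ≤ b := le_trans ha2' (Nat.le_self_pow (pow_ne_zero _ (by norm_num)) a)
      have hb4 : 4 ≤ b ^ 2 := by nlinarith
      rw [hbsq] at hs
      rcases Nat.even_or_odd b with ⟨c, hc⟩ | ⟨c, hc⟩
      · have h2d : 2 ∣ b ^ 2 := by
          refine dvd_pow ⟨c, ?_⟩ (by norm_num)
          omega
        rcases Nat.eq_zero_or_pos s with rfl | hs0
        · simp at hs
          omega
        · have : 2 ∣ 2 ^ s := dvd_pow_self 2 hs0.ne'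
          omega
      · have h4 : b ^ 2 + 1 = 4 * (c * c + c) + 2 := by rw [hc]; ring
        rcases Nat.lt_or_ge s 2 with hs2 | hs2
        · interval_cases s <;> omega
        · have h4d : (4 : ℕ) ∣ 2 ^ s := by
            have : 2 ^ s = 4 * 2 ^ (s - 2) := by
              rw [show (4 : ℕ) = 2 ^ 2 from rfl, ← pow_add]
              congr 1
              omega
            exact ⟨2 ^ (s - 2), this⟩
          omega
  choose q hq1 hq2 hq3 using hqex
  set L := r ! + a + 2 with hLdef
  set Qf : ℕ → ℕ := fun m => if m = τ - 1 then p₀ else q m with hQfdef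
  have hQfP : ∀ m, (Qf m).Prime := by
    intro m
    by_cases h : m = τ - 1 <;> simp [hQfdef, h, hp₀, hq1]
  have hQf2 : ∀ m, Qf m ≠ 2 := by
    intro m
    by_cases h : m = τ - 1 <;> simp [hQfdef, h, hp₀2, hq2]
  have hQfd : ∀ m, Qf m ∣ a ^ 2 ^ m + 1 := by
    intro m
    by_cases h : m = τ - 1
    · simp only [hQfdef, if_pos h]
      rw [h]
      exact hP0X
    · simp only [hQfdef, if_neg h]
      exact hq3 m
  have hQfnepτ : ∀ m, m < τ → Qf m ≠ pτ := by
    intro m hm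
    by_cases h : m = τ - 1
    · simpa [hQfdef, h] using hne
    · simp only [hQfdef, if_neg h]
      intro heq
      have hd : pτ ∣ a ^ 2 ^ m + 1 := heq ▸ hq3 m
      have hd2 : pτ ∣ a ^ 2 ^ (m + 1) - 1 := by
        rw [auxSqFac a m (by omega)]
        exact Dvd.dvd.mul_left hd _
      exact (hmain (m + 1) (by omega)).2 hd2
  -- none of the covering primes divides a - 1
  have hnd_gen : ∀ p : ℕ, p.Prime → p ≠ 2 → (∃ m : ℕ, p ∣ a ^ 2 ^ m + 1) → ¬ p ∣ a - 1 := by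
    rintro p hp hp2 ⟨m, hd⟩ hdvd
    have h1 : a ≡ 1 [MOD p] := ((Nat.modEq_iff_dvd' (by omega)).mpr hdvd).symm
    have h2 : a ^ 2 ^ m ≡ 1 [MOD p] := by simpa using h1.pow (2 ^ m)
    have h3 : a ^ 2 ^ m + 1 ≡ 2 [MOD p] := by simpa using h2.add_right 1
    have h0 : a ^ 2 ^ m + 1 ≡ 0 [MOD p] := (Nat.modEq_zero_iff_dvd).mpr hd
    have h4 : p ∣ 2 := (Nat.modEq_zero_iff_dvd).mp (h3.symm.trans h0)
    exact hp2 ((Nat.prime_dvd_prime_iff_eq hp Nat.prime_two).mp h4)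
  have hQfnd : ∀ m, ¬ Qf m ∣ a - 1 :=
    fun m => hnd_gen (Qf m) (hQfP m) (hQf2 m) ⟨m, hQfd m⟩
  have hpτnd : ¬ pτ ∣ a - 1 := by
    have := (hmain 0 hτpos).2
    simpa only [pow_zero, pow_one] using this
  -- the moduli
  set A := ∏ m ∈ Finset.range τ, Qf m ^ L with hAdef
  set B := pτ ^ L with hBdef
  set D := ∏ ℓ ∈ (a - 1).primeFactors, ℓ ^ L with hDdef
  have hL0 : L ≠ 0 := by omega
  have hApos : 0 < A := Finset.prod_pos fun m _ => pow_pos (hQfP m).pos L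
  have hBpos : 0 < B := pow_pos hpτ.pos L
  have hDpos : 0 < D :=
    Finset.prod_pos fun ℓ hℓ => pow_pos (Nat.prime_of_mem_primeFactors hℓ).pos L
  have hAB : Nat.Coprime A B :=
    Nat.Coprime.prod_left fun m hm =>
      Nat.Coprime.pow _ _
        ((Nat.coprime_primes (hQfP m) hpτ).mpr (hQfnepτ m (Finset.mem_range.mp hm)))
  have hABD : Nat.Coprime (A * B) D := by
    apply Nat.Coprime.mul
    · apply Nat.Coprime.prod_left
      intro m _
      apply Nat.Coprime.prod_right
      intro ℓ hℓ
      refine Nat.Coprime.pow _ _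
        ((Nat.coprime_primes (hQfP m) (Nat.prime_of_mem_primeFactors hℓ)).mpr ?_)
      intro heq
      exact hQfnd m (heq ▸ Nat.dvd_of_mem_primeFactors hℓ)
    · apply Nat.Coprime.prod_right
      intro ℓ hℓ
      refine Nat.Coprime.pow _ _
        ((Nat.coprime_primes hpτ (Nat.prime_of_mem_primeFactors hℓ)).mpr ?_)
      intro heq
      exact hpτnd (heq ▸ Nat.dvd_of_mem_primeFactors hℓ)
  obtain ⟨c₁, hc₁A, hc₁B⟩ := Nat.chineseRemainder hAB r (B - 1)
  obtain ⟨x₀, hx₀AB, hx₀D⟩ := Nat.chineseRemainder hABD c₁ (r - 1)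
  have hx₀A : x₀ ≡ r [MOD A] :=
    (Nat.ModEq.of_dvd (dvd_mul_right A B) hx₀AB).trans hc₁A
  have hx₀B : x₀ ≡ B - 1 [MOD B] :=
    (Nat.ModEq.of_dvd (dvd_mul_left B A) hx₀AB).trans hc₁B
  set P := A * B * D with hPdef
  have hPpos : 0 < P := by positivity
  refine Set.infinite_of_injective_forall_mem
    (f := fun t : ℕ => x₀ + P * (t + (r + 2))) ?_ ?_
  · intro t₁ t₂ h
    simp only at h
    have h2 := Nat.add_left_cancel h
    have h3 := Nat.eq_of_mul_eq_mul_left hPpos h2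
    omega
  · intro t
    simp only [Set.mem_setOf_eq]
    set k := x₀ + P * (t + (r + 2)) with hkdef
    have hkP : P * (r + 2) ≤ k := by
      have := Nat.mul_le_mul_left P (show r + 2 ≤ t + (r + 2) by omega)
      omega
    have hPr : P + r + 1 ≤ P * (r + 2) := by
      have h1 : P * (r + 2) = P * r + P + P := by ring
      have h2 : r ≤ P * r := Nat.le_mul_of_pos_left r hPpos
      omega
    have hrk : r ≤ k := by omega
    set C := k.choose r with hCdef
    have hClb : P + 2 ≤ C := by
      have h1 := auxChooseLB (r - 1) (k - r)
      rw [show r - 1 + 1 = r from by omega, show r + (k - r) = k from by omega] at h1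
      omega
    -- congruences satisfied by k
    have hmodk : ∀ M : ℕ, M ∣ P → k ≡ x₀ [MOD M] := by
      intro M hM
      have h1 : M ∣ P * (t + (r + 2)) := hM.mul_right _
      have h2 : k - x₀ = P * (t + (r + 2)) := by omega
      exact ((Nat.modEq_iff_dvd' (by omega)).mpr (h2 ▸ h1)).symm
    have hkA : k ≡ r [MOD A] :=
      (hmodk A ⟨B * D, by ring⟩).trans hx₀A
    have hkB : k ≡ B - 1 [MOD B] :=
      (hmodk B ⟨A * D, by ring⟩).trans hx₀B
    have hkD : k ≡ r - 1 [MOD D] :=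
      (hmodk D ⟨A * B, by ring⟩).trans hx₀D
    have hkB1 : (pτ : ℤ) ^ L ∣ (k : ℤ) - (-1) := by
      have h3 : k + 1 ≡ B - 1 + 1 [MOD B] := hkB.add_right 1
      rw [show B - 1 + 1 = B from by omega] at h3
      have h5 : B ∣ k + 1 :=
        (Nat.modEq_zero_iff_dvd).mp (h3.trans ((Nat.modEq_zero_iff_dvd).mpr dvd_rfl))
      have h6 : ((B : ℕ) : ℤ) ∣ ((k + 1 : ℕ) : ℤ) := Int.natCast_dvd_natCast.mpr h5
      rw [hBdef] at h6
      push_cast at h6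
      simpa [sub_neg_eq_add] using h6
    have hLb : ∀ p : ℕ, (r !).factorization p + 1 ≤ L := by
      intro p
      have := auxFactLe p (r !) (Nat.factorial_ne_zero r)
      omega
    -- C ≡ 1 mod each covering prime Qf m
    have hCQ : ∀ m, m < τ → (C : ZMod (Qf m)) = 1 := by
      intro m hm
      have h1 : Qf m ^ L ∣ A := Finset.dvd_prod_of_mem _ (Finset.mem_range.mpr hm)
      have h2 := Nat.ModEq.of_dvd h1 hkA
      have h3 := h2.dvd
      have h4 := dvd_neg.mpr h3
      rw [neg_sub] at h4
      push_cast at h4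
      have h5 := auxChooseMod (Qf m) r k L 1 (hQfP m) hrk
        (by have := hLb (Qf m); omega) (r : ℤ) 1 h4 (auxProdR r)
      have h7 : (((C : ℤ) - 1 : ℤ) : ZMod (Qf m)) = 0 :=
        (ZMod.intCast_zmod_eq_zero_iff_dvd _ _).mpr (by simpa using h5)
      push_cast at h7
      exact sub_eq_zero.mp h7
    -- C ≡ -1 mod pτ
    have hCpτ : (C : ZMod pτ) = -1 := by
      have h5 := auxChooseMod pτ r k L 1 hpτ hrk
        (by have := hLb pτ; omega) (-1 : ℤ) (-1) hkB1
        (by rw [auxProdNeg r, Odd.neg_one_pow hodd]; ring)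
      have h7 : (((C : ℤ) - (-1) : ℤ) : ZMod pτ) = 0 :=
        (ZMod.intCast_zmod_eq_zero_iff_dvd _ _).mpr (by simpa using h5)
      push_cast at h7
      have h8 : (C : ZMod pτ) + 1 = 0 := by linear_combination h7
      exact eq_neg_of_add_eq_zero_left h8
    -- (a - 1) ∣ C
    have hDdvdC : (a - 1) ∣ C := by
      apply (Nat.factorization_le_iff_dvd (by omega) (by omega)).mp
      intro ℓ
      by_cases hℓ : ℓ ∈ (a - 1).primeFactors
      · have hpℓ := Nat.prime_of_mem_primeFactors hℓ
        set β := (a - 1).factorization ℓ with hβdef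
        have hβa : β ≤ a := by
          have := auxFactLe ℓ (a - 1) (by omega)
          omega
        have h1 : ℓ ^ L ∣ D := Finset.dvd_prod_of_mem _ hℓ
        have h2 := Nat.ModEq.of_dvd h1 hkD
        have h3 := h2.dvd
        have h4 := dvd_neg.mpr h3
        rw [neg_sub] at h4
        have hcast : ((r - 1 : ℕ) : ℤ) = (r : ℤ) - 1 := by
          exact_mod_cast Nat.cast_sub hr
        have h4' : (ℓ : ℤ) ^ L ∣ (k : ℤ) - ((r : ℤ) - 1) := by
          rw [← hcast]
          have h5c : ((ℓ ^ L : ℕ) : ℤ) = (ℓ : ℤ) ^ L := by push_cast; ring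
          rw [← h5c]
          exact h4
        have hprod0 : (∏ j ∈ Finset.range r, (((r : ℤ) - 1) - (j : ℤ))) = (r ! : ℤ) * 0 := by
          rw [mul_zero]
          apply Finset.prod_eq_zero (Finset.mem_range.mpr (show r - 1 < r by omega))
          rw [hcast, sub_self]
        have h5 := auxChooseMod ℓ r k L β hpℓ hrk
          (by have h₁ := auxFactLe ℓ (r !) (Nat.factorial_ne_zero r); omega)
          ((r : ℤ) - 1) 0 h4' hprod0
        have h6 : ℓ ^ β ∣ C := by
          have : (ℓ : ℤ) ^ β ∣ (C : ℤ) := by simpa using h5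
          exact_mod_cast this
        exact (Nat.Prime.pow_dvd_iff_le_factorization hpℓ (by omega)).mp h6
      · have h0 : (a - 1).factorization ℓ = 0 :=
          Finsupp.notMem_support_iff.mp (by rwa [Nat.support_factorization])
        omega
    -- a^(2^m) ≡ -1 mod Qf m
    have hQfX : ∀ m, (a : ZMod (Qf m)) ^ 2 ^ m = -1 := by
      intro m
      have h1 : ((a ^ 2 ^ m + 1 : ℕ) : ZMod (Qf m)) = 0 :=
        (ZMod.natCast_eq_zero_iff _ _).mpr (hQfd m)
      push_cast at h1
      exact eq_neg_of_add_eq_zero_left h1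
    -- a^(2^τ) ≡ 1 mod pτ
    have hoτ : (a : ZMod pτ) ^ 2 ^ τ = 1 := by
      have h1 : 1 ≡ a ^ 2 ^ τ [MOD pτ] :=
        (Nat.modEq_iff_dvd' (Nat.one_le_pow _ _ (by omega))).mpr hpτd
      have h2 := (ZMod.natCast_eq_natCast_iff _ _ _).mpr h1.symm
      push_cast at h2
      exact h2
    haveI hf0 : Fact (2 < p₀) := ⟨by omega⟩
    haveI hfτ : Fact (2 < pτ) := ⟨by omega⟩
    refine ⟨by omega, ?_, ?_, ?_⟩
    · -- gcd condition
      have h2 : Nat.gcd (C + 1) (a - 1) ∣ C + 1 := Nat.gcd_dvd_left _ _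
      have h3 : Nat.gcd (C + 1) (a - 1) ∣ C := dvd_trans (Nat.gcd_dvd_right _ _) hDdvdC
      have h4 := Nat.dvd_sub h2 h3
      simpa using h4
    · -- not a power of a
      rintro ⟨e, he⟩
      have hQfτ : Qf (τ - 1) = p₀ := by simp [hQfdef]
      have hC1 : (C : ZMod p₀) = 1 := by
        have := hCQ (τ - 1) (by omega)
        rwa [hQfτ] at this
      have hXm1 : (a : ZMod p₀) ^ 2 ^ (τ - 1) = -1 := by
        have h1 : ((a ^ 2 ^ (τ - 1) + 1 : ℕ) : ZMod p₀) = 0 :=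
          (ZMod.natCast_eq_zero_iff _ _).mpr hP0X
        push_cast at h1
        exact eq_neg_of_add_eq_zero_left h1
      have hone : (a : ZMod p₀) ^ 2 ^ τ = 1 := by
        rw [show 2 ^ τ = 2 ^ (τ - 1) * 2 from by
          rw [← pow_succ]; congr 1; omega]
        rw [pow_mul, hXm1]
        ring
      have hdvd2τ : orderOf (a : ZMod p₀) ∣ 2 ^ τ := orderOf_dvd_of_pow_eq_one hone
      obtain ⟨j, hjτ, hdj⟩ := (Nat.dvd_prime_pow Nat.prime_two).mp hdvd2τ
      have hjeq : j = τ := by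
        by_contra hjne
        have h2 : orderOf (a : ZMod p₀) ∣ 2 ^ (τ - 1) :=
          hdj ▸ pow_dvd_pow 2 (by omega)
        have h3 : (a : ZMod p₀) ^ 2 ^ (τ - 1) = 1 := orderOf_dvd_iff_pow_eq_one.mp h2
        rw [hXm1] at h3
        exact ZMod.neg_one_ne_one h3
      have hae : (a : ZMod p₀) ^ e = 1 := by
        have h1 : ((a ^ e : ℕ) : ZMod p₀) = (C : ZMod p₀) := by rw [← he]
        push_cast at h1
        rw [h1, hC1]
      have h2τe : 2 ^ τ ∣ e := by
        have h1 : orderOf (a : ZMod p₀) ∣ e := orderOf_dvd_of_pow_eq_one hae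
        rwa [hdj, hjeq] at h1
      obtain ⟨w, hw⟩ := h2τe
      have hCone : (C : ZMod pτ) = 1 := by
        calc (C : ZMod pτ) = ((a ^ e : ℕ) : ZMod pτ) := by rw [he]
          _ = ((a : ZMod pτ)) ^ e := by push_cast; ring
          _ = (((a : ZMod pτ)) ^ 2 ^ τ) ^ w := by rw [← pow_mul, ← hw]
          _ = 1 := by rw [hoτ, one_pow]
      rw [hCpτ] at hCone
      exact ZMod.neg_one_ne_one hCone
    · -- compositeness
      intro n hn
      have han : 1 ≤ a ^ n := Nat.one_le_pow _ _ (by omega)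
      have hCan : C ≤ C * a ^ n := Nat.le_mul_of_pos_right C (by omega)
      constructor
      · omega
      · have hconc : ∀ p : ℕ, p.Prime → p ∣ C * a ^ n + 1 → p ∣ P →
            ¬ (C * a ^ n + 1).Prime := by
          intro p hp hdv hdP hPr
          rcases hPr.eq_one_or_self_of_dvd p hdv with h | h
          · exact hp.one_lt.ne' h
          · have hpP : p ≤ P := Nat.le_of_dvd hPpos hdP
            omega
        by_cases h2τn : 2 ^ τ ∣ n
        · apply hconc pτ hpτ ?_ ?_
          · have h0 : ((C * a ^ n + 1 : ℕ) : ZMod pτ) = 0 := by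
              push_cast
              obtain ⟨w, hw⟩ := h2τn
              have h1 : (a : ZMod pτ) ^ n = 1 := by
                rw [hw, pow_mul, hoτ, one_pow]
              rw [hCpτ, h1]
              ring
            exact (ZMod.natCast_eq_zero_iff _ _).mp h0
          · calc pτ ∣ B := dvd_pow_self pτ hL0
              _ ∣ P := ⟨A * D, by ring⟩
        · have hmτ : n.factorization 2 < τ := by
            by_contra hge
            exact h2τn (dvd_trans (pow_dvd_pow 2 (by omega)) (Nat.ordProj_dvd n 2))
          set m := n.factorization 2 with hmdef
          have hnw : 2 ^ m * (n / 2 ^ m) = n := Nat.ordProj_mul_ordCompl_eq_self n 2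
          have hwodd : ¬ 2 ∣ (n / 2 ^ m) := Nat.not_dvd_ordCompl Nat.prime_two (by omega)
          have hwOdd : Odd (n / 2 ^ m) := Nat.odd_iff.mpr (by omega)
          apply hconc (Qf m) (hQfP m) ?_ ?_
          · have h0 : ((C * a ^ n + 1 : ℕ) : ZMod (Qf m)) = 0 := by
              push_cast
              have h1 : (a : ZMod (Qf m)) ^ n = -1 := by
                rw [← hnw, pow_mul, hQfX m, Odd.neg_one_pow hwOdd]
              rw [hCQ m hmτ, h1]
              ring
            exact (ZMod.natCast_eq_zero_iff _ _).mp h0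
          · calc Qf m ∣ Qf m ^ L := dvd_pow_self _ hL0
              _ ∣ A := Finset.dvd_prod_of_mem _ (Finset.mem_range.mpr hmτ)
              _ ∣ P := ⟨B * D, by ring⟩
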